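/- Let V be a finite-dimensional complex vector space, ω a symplectic (non-degenerate alternating) ℂ-bilinear form on V, and h a Hermitian metric on V. Then h is compatible with ω if and only if there exists a basis (v_1, …, v_{2m}) of V (so dim V = 2m is even) which is orthonormal with respect to h (h(v_i, v_j) = δ_{ij}) and symplectic with respect to ω (ω(v_{2i−1}, v_{2i}) = 1 = −ω(v_{2i}, v_{2i−1}) for 1 ≤ i ≤ m, and ω(v_i, v_j) = 0 for all other pairs i, j). -/

import Mathlib

noncomputable section

variable {V : Type*} [AddCommGroup V] [Module ℂ V] [FiniteDimensional ℂ V]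

/-- `h` is a Hermitian metric on the complex vector space `V`:
it is additive and `ℂ`-linear in the first argument, Hermitian-symmetric
(hence conjugate-linear in the second argument), and positive definite. -/
def IsHermitianMetric (h : V → V → ℂ) : Prop :=
  (∀ u v w : V, h (u + v) w = h u w + h v w) ∧
  (∀ (a : ℂ) (u v : V), h (a • u) v = a * h u v) ∧
  (∀ u v : V, h u v = starRingEnd ℂ (h v u)) ∧
  (∀ v : V, v ≠ 0 → 0 < (h v v).re)

/-- `C` is a non-degenerate symmetric `ℂ`-bilinear form on `V`. -/
def IsNondegSymmBilin (C : V → V → ℂ) : Prop :=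
  (∀ u v w : V, C (u + v) w = C u w + C v w) ∧
  (∀ (a : ℂ) (u v : V), C (a • u) v = a * C u v) ∧
  (∀ u v : V, C u v = C v u) ∧
  (∀ v : V, (∀ u : V, C v u = 0) → v = 0)

/-- `Ψ_h : V → V^*`, `Ψ_h(u)(v) = h(v,u)`; it is conjugate-linear in `u`. -/
def PsiH (h : V → V → ℂ) : V → V → ℂ := fun u v => h v u

/-- The dual Hermitian metric `h^∨` on `V^* `:
`h^∨(f,g) = h(Ψ_h⁻¹(g), Ψ_h⁻¹(f))`. -/
def dualMetric (h : V → V → ℂ) : (V → ℂ) → (V → ℂ) → ℂ :=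
  fun f g => h (Function.invFun (PsiH h) g) (Function.invFun (PsiH h) f)

/-- `h` is compatible with the form `C` if `Ψ_C : V → V^*`, `Ψ_C(u) = C(u,·) = C u`,
is isometric with respect to `h` and `h^∨`, i.e. `h^∨(Ψ_C u, Ψ_C v) = h(u,v)`. -/
def Compatible (h C : V → V → ℂ) : Prop :=
  ∀ u v : V, dualMetric h (C u) (C v) = h u v

/-- `ω` is a symplectic (non-degenerate alternating) `ℂ`-bilinear form on `V`. -/
def IsSymplecticForm (ω : V → V → ℂ) : Prop :=
  (∀ u v w : V, ω (u + v) w = ω u w + ω v w) ∧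
  (∀ (a : ℂ) (u v : V), ω (a • u) v = a * ω u v) ∧
  (∀ u v w : V, ω u (v + w) = ω u v + ω u w) ∧
  (∀ (a : ℂ) (u v : V), ω u (a • v) = a * ω u v) ∧
  (∀ v : V, ω v v = 0) ∧
  (∀ v : V, (∀ u : V, ω v u = 0) → v = 0)

open scoped InnerProductSpace ComplexConjugate
open Module Submodule

section Aux
variable {E : Type*} [NormedAddCommGroup E] [InnerProductSpace ℂ E]

lemma aux_eq_of_inner_basis {ι : Type*} [Fintype ι] (b : Basis ι ℂ E) {x y : E}
    (hxy : ∀ i, ⟪x, b i⟫_ℂ = ⟪y, b i⟫_ℂ) : x = y := by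
  have key : ∀ w : E, ⟪x - y, w⟫_ℂ = 0 := by
    intro w
    rw [← b.sum_repr w, inner_sum]
    simp [inner_smul_right, inner_sub_left, hxy]
  have h0 := key (x - y)
  rwa [inner_self_eq_zero, sub_eq_zero] at h0

lemma aux_sesq_ext {ι : Type*} [Fintype ι] (b : Basis ι ℂ E) (A : E →ₛₗ[starRingEnd ℂ] E)
    (hb : ∀ i j, ⟪A (b i), A (b j)⟫_ℂ = ⟪b j, b i⟫_ℂ) (x y : E) :
    ⟪A x, A y⟫_ℂ = ⟪y, x⟫_ℂ := by
  rw [← b.sum_repr x, ← b.sum_repr y]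
  simp only [map_sum, map_smulₛₗ, sum_inner, inner_sum, inner_smul_left, inner_smul_right,
    hb, Complex.conj_conj, Finset.mul_sum]
  rw [Finset.sum_comm]
  exact Finset.sum_congr rfl fun j _ => Finset.sum_congr rfl fun i _ => by ring

lemma aux_mem_orth_span {s : Set E} {x : E} (hx : ∀ y ∈ s, ⟪y, x⟫_ℂ = 0) :
    x ∈ (Submodule.span ℂ s)ᗮ := by
  rw [Submodule.mem_orthogonal]
  intro y hy
  induction hy using Submodule.span_induction with
  | mem y hys => exact hx y hys
  | zero => exact inner_zero_left x
  | add a b _ _ ha hb => rw [inner_add_left, ha, hb, add_zero]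
  | smul c a _ ha => rw [inner_smul_left, ha, mul_zero]

end Aux

section Aux2
variable {E : Type*} [NormedAddCommGroup E] [InnerProductSpace ℂ E]

lemma aux_exists_family [FiniteDimensional ℂ E] (A : E → E)
    (hAA : ∀ x y, ⟪A x, A y⟫_ℂ = ⟪y, x⟫_ℂ) (hA2 : ∀ x, A (A x) = -x) :
    ∀ (n : ℕ) (K : Submodule ℂ E), (∀ x ∈ K, A x ∈ K) → finrank ℂ K = n →
      ∃ (m : ℕ) (f : Fin m → E), (∀ i, f i ∈ K) ∧
        (∀ i j, ⟪f i, f j⟫_ℂ = if i = j then 1 else 0) ∧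
        (∀ i j, ⟪f i, A (f j)⟫_ℂ = 0) ∧
        Submodule.span ℂ (Set.range f ∪ A '' Set.range f) = K := by
  intro n
  induction n using Nat.strong_induction_on with
  | _ n ih =>
  intro K hK hrank
  rcases eq_or_ne K ⊥ with rfl | hKbot
  · exact ⟨0, Fin.elim0, fun i => i.elim0, fun i => i.elim0, fun i => i.elim0, by simp⟩
  obtain ⟨u0, hu0K, hu0⟩ := Submodule.exists_mem_ne_zero_of_ne_bot hKbot
  have hn0 : 0 < n := by
    rcases Nat.eq_zero_or_pos n with h0 | h0
    · exact absurd (Submodule.finrank_eq_zero.mp (hrank.trans h0)) hKbot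
    · exact h0
  set u : E := ((‖u0‖ : ℂ))⁻¹ • u0 with hu_def
  have huK : u ∈ K := K.smul_mem _ hu0K
  have hnorm0 : (‖u0‖ : ℂ) ≠ 0 := by
    exact_mod_cast norm_ne_zero_iff.mpr hu0
  have hu_norm : ⟪u, u⟫_ℂ = 1 := by
    rw [hu_def, inner_smul_left, inner_smul_right, inner_self_eq_norm_sq_to_K]
    rw [map_inv₀, Complex.conj_ofReal]
    field_simp
    rfl
  have hAu_u : ⟪A u, u⟫_ℂ = 0 := by
    have h1 : ⟪A u, A (A u)⟫_ℂ = ⟪A u, u⟫_ℂ := hAA u (A u)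
    rw [hA2, inner_neg_right] at h1
    have h2 : ⟪A u, u⟫_ℂ + ⟪A u, u⟫_ℂ = 0 := by linear_combination -h1
    exact add_self_eq_zero.mp h2
  have hu_Au : ⟪u, A u⟫_ℂ = 0 := by
    rw [← inner_conj_symm, hAu_u, map_zero]
  have hAuAu : ⟪A u, A u⟫_ℂ = 1 := by rw [hAA, hu_norm]
  set g : Fin 2 → E := ![u, A u] with hg_def
  have hg_on : Orthonormal ℂ g := by
    rw [orthonormal_iff_ite]
    intro i j
    fin_cases i <;> fin_cases j <;>
      simp [hg_def, hu_norm, hu_Au, hAu_u, hAuAu]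
    all_goals simp [inner_self_eq_norm_sq_to_K] at hu_norm hAuAu; assumption
  have hg_range : Set.range g = {u, A u} := by
    simp only [hg_def, Matrix.range_cons, Matrix.range_empty, Set.union_empty,
      Set.union_singleton]
    exact Set.pair_comm (A u) u
  set S : Submodule ℂ E := Submodule.span ℂ ({u, A u} : Set E) with hS_def
  have hS_le : S ≤ K := by
    rw [hS_def, Submodule.span_le]
    rintro x (rfl | rfl)
    · exact huK
    · exact hK u huK
  have hS_rank : finrank ℂ S = 2 := by
    rw [hS_def, ← hg_range, finrank_span_eq_card hg_on.linearIndependent]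
    simp
  have hn2 : 2 ≤ n := by
    rw [← hrank, ← hS_rank]
    exact Submodule.finrank_mono hS_le
  set K' : Submodule ℂ E := Sᗮ ⊓ K with hK'_def
  have hK'_le : K' ≤ K := inf_le_right
  have hK'_orth : K' ≤ Sᗮ := inf_le_left
  -- inner products of S-generators with elements of K'
  have horthu : ∀ x ∈ K', ⟪u, x⟫_ℂ = 0 := fun x hx =>
    (hK'_orth hx) u (Submodule.subset_span (by simp))
  have horthAu : ∀ x ∈ K', ⟪A u, x⟫_ℂ = 0 := fun x hx =>
    (hK'_orth hx) (A u) (Submodule.subset_span (by simp))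
  have hK'A : ∀ x ∈ K', A x ∈ K' := by
    intro x hx
    refine Submodule.mem_inf.mpr ⟨?_, hK x (hK'_le hx)⟩
    apply aux_mem_orth_span
    rintro y (rfl | rfl)
    · -- ⟪u, A x⟫ = 0
      have hux : ⟪A x, u⟫_ℂ = 0 := by
        have h3 := hAA x (A u)
        rw [hA2, inner_neg_right, horthAu x hx] at h3
        exact neg_eq_zero.mp h3
      rw [← inner_conj_symm, hux, map_zero]
    · -- ⟪A u, A x⟫ = 0
      rw [hAA, ← inner_conj_symm, horthu x hx, map_zero]
  have hK'_rank : finrank ℂ K' = n - 2 := by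
    rw [hK'_def]
    exact Submodule.finrank_add_inf_finrank_orthogonal' hS_le
      (by rw [hS_rank, hrank]; omega)
  obtain ⟨m, f, hfK, hff, hfA, hfspan⟩ := ih (n - 2) (by omega) K' hK'A hK'_rank
  refine ⟨m + 1, Fin.cons u f, ?_, ?_, ?_, ?_⟩
  · intro i
    refine Fin.cases ?_ ?_ i
    · exact huK
    · intro j; exact hK'_le (hfK j)
  · intro i j
    refine Fin.cases ?_ ?_ i <;> [skip; intro i'] <;> refine Fin.cases ?_ ?_ j <;>
      try intro j'
    · simpa using hu_norm
    · simp only [Fin.cons_zero, Fin.cons_succ]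
      rw [horthu _ (hfK _), if_neg (Fin.succ_ne_zero _).symm]
    · simp only [Fin.cons_zero, Fin.cons_succ]
      rw [← inner_conj_symm, horthu _ (hfK _), map_zero, if_neg (Fin.succ_ne_zero _)]
    · simp only [Fin.cons_succ]
      rw [hff]
      exact if_congr Fin.succ_inj.symm rfl rfl
  · intro i j
    refine Fin.cases ?_ ?_ i <;> [skip; intro i'] <;> refine Fin.cases ?_ ?_ j <;>
      try intro j'
    · simpa using hu_Au
    · simp only [Fin.cons_zero, Fin.cons_succ]
      exact horthu _ (hK'A _ (hfK _))
    · simp only [Fin.cons_zero, Fin.cons_succ]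
      rw [← inner_conj_symm, horthAu _ (hfK _), map_zero]
    · simp only [Fin.cons_succ]
      exact hfA i' j'
  · have hrange : Set.range (Fin.cons u f : Fin (m+1) → E) = insert u (Set.range f) :=
      Fin.range_cons u f
    rw [hrange, Set.image_insert_eq]
    have hsets : (insert u (Set.range f)) ∪ (insert (A u) (A '' Set.range f)) =
        ({u, A u} : Set E) ∪ (Set.range f ∪ A '' Set.range f) := by
      ext x; simp; tauto
    rw [hsets, Submodule.span_union, hfspan, ← hS_def]
    rw [hK'_def]
    exact Submodule.sup_orthogonal_inf_of_hasOrthogonalProjection hS_le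

end Aux2

/-- A Hermitian metric `h` is compatible with a symplectic form `ω` iff there exists
a basis `v_0, …, v_{2m-1}` of `V` (indices starting at `0`, consecutive pairs
`(v_{2i}, v_{2i+1})`) which is orthonormal with respect to `h` and symplectic with
respect to `ω`: `ω (v_{2i}) (v_{2i+1}) = 1 = - ω (v_{2i+1}) (v_{2i})` and
`ω (v_i) (v_j) = 0` for all other pairs. -/
theorem compatible_symplectic_iff_exists_unitary_symplectic_basis
    (h ω : V → V → ℂ) (hh : IsHermitianMetric h) (hω : IsSymplecticForm ω) :
    Compatible h ω ↔
      ∃ (m : ℕ) (v : Basis (Fin (2 * m)) ℂ V),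
        (∀ i j, h (v i) (v j) = if i = j then 1 else 0) ∧
        (∀ i j : Fin (2 * m),
          ω (v i) (v j) =
            if (i : ℕ) % 2 = 0 ∧ (j : ℕ) = (i : ℕ) + 1 then 1
            else if (j : ℕ) % 2 = 0 ∧ (i : ℕ) = (j : ℕ) + 1 then -1
            else 0) := by
  obtain ⟨hadd, hsmul, hsymm, hpos⟩ := hh
  obtain ⟨ω1, ω2, ω3, ω4, ω5, -⟩ := hω
  have hzero : ∀ w : V, h 0 w = 0 := by
    intro w
    have h1 := hadd 0 0 w
    rw [add_zero] at h1
    exact left_eq_add.mp h1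
  letI c : InnerProductSpace.Core ℂ V :=
    { inner := fun x y => h y x
      conj_inner_symm := fun x y => by
        show (starRingEnd ℂ) (h x y) = h y x
        rw [hsymm x y, Complex.conj_conj]
      re_inner_nonneg := fun x => by
        show 0 ≤ (h x x).re
        rcases eq_or_ne x 0 with rfl | hx
        · rw [hzero]; simp
        · exact le_of_lt (hpos x hx)
      add_left := fun x y z => by
        show h z (x + y) = h z x + h z y
        calc h z (x + y) = (starRingEnd ℂ) (h (x + y) z) := hsymm _ _
          _ = (starRingEnd ℂ) (h x z + h y z) := by rw [hadd]
          _ = (starRingEnd ℂ) (h x z) + (starRingEnd ℂ) (h y z) := by rw [map_add]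
          _ = h z x + h z y := by rw [← hsymm, ← hsymm]
      smul_left := fun x y r => by
        show h y (r • x) = (starRingEnd ℂ) r * h y x
        calc h y (r • x) = (starRingEnd ℂ) (h (r • x) y) := hsymm _ _
          _ = (starRingEnd ℂ) (r * h x y) := by rw [hsmul]
          _ = (starRingEnd ℂ) r * (starRingEnd ℂ) (h x y) := by rw [map_mul]
          _ = (starRingEnd ℂ) r * h y x := by rw [← hsymm]
      definite := fun x hx => by
        by_contra hx0
        have hp := hpos x hx0
        have hx' : h x x = 0 := hx
        rw [hx'] at hp
        simp at hp }
  letI : NormedAddCommGroup V := c.toNormedAddCommGroup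
  letI : InnerProductSpace ℂ V := InnerProductSpace.ofCore c.toCore
  haveI : CompleteSpace V := FiniteDimensional.complete ℂ V
  have hinner : ∀ x y : V, ⟪x, y⟫_ℂ = h y x := fun _ _ => rfl
  -- the conjugate-linear map `A0` with `⟪A0 u, w⟫ = ω u w`
  have hA0ex : ∃ A0 : V → V, ∀ u w : V, ⟪A0 u, w⟫_ℂ = ω u w := by
    have hΩ : ∀ u : V, ∃ x : V, ∀ w, ⟪x, w⟫_ℂ = ω u w := by
      intro u
      refine ⟨(InnerProductSpace.toDual ℂ V).symm
        (LinearMap.toContinuousLinearMap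
          { toFun := ω u, map_add' := ω3 u,
            map_smul' := fun a w => by
              show ω u (a • w) = (RingHom.id ℂ) a • ω u w
              rw [ω4]; simp }), fun w => ?_⟩
      rw [InnerProductSpace.toDual_symm_apply]
      simp
    choose A0 hA0 using hΩ
    exact ⟨A0, hA0⟩
  obtain ⟨A0, hA0⟩ := hA0ex
  have hA0add : ∀ x y : V, A0 (x + y) = A0 x + A0 y := by
    intro x y
    apply ext_inner_right ℂ
    intro w
    rw [hA0, ω1, inner_add_left, hA0, hA0]
  have hA0smul : ∀ (a : ℂ) (x : V), A0 (a • x) = (starRingEnd ℂ) a • A0 x := by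
    intro a x
    apply ext_inner_right ℂ
    intro w
    rw [hA0, ω2, inner_smul_left, Complex.conj_conj, hA0]
  have hinj : Function.Injective (PsiH h) := by
    intro a b hab
    apply ext_inner_right ℂ
    intro w
    rw [hinner, hinner]
    exact congrFun hab w
  have hinv : ∀ v : V, Function.invFun (PsiH h) (ω v) = A0 v := by
    intro v
    have hPsi : PsiH h (A0 v) = ω v := by
      funext w
      show h w (A0 v) = ω v w
      rw [← hinner, hA0]
    rw [← hPsi, Function.leftInverse_invFun hinj]
  have hiff : Compatible h ω ↔ ∀ u v : V, ⟪A0 u, A0 v⟫_ℂ = ⟪v, u⟫_ℂ := by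
    constructor
    · intro hc u v
      have hthis := hc u v
      unfold dualMetric at hthis
      rw [hinv, hinv] at hthis
      calc ⟪A0 u, A0 v⟫_ℂ = h (A0 v) (A0 u) := hinner _ _
        _ = h u v := hthis
        _ = ⟪v, u⟫_ℂ := (hinner v u).symm
    · intro hc u v
      show dualMetric h (ω u) (ω v) = h u v
      unfold dualMetric
      rw [hinv, hinv]
      calc h (A0 v) (A0 u) = ⟪A0 u, A0 v⟫_ℂ := (hinner _ _).symm
        _ = ⟪v, u⟫_ℂ := hc u v
        _ = h u v := hinner v u
  constructor
  · -- forward direction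
    intro hc
    have hAA : ∀ x y : V, ⟪A0 x, A0 y⟫_ℂ = ⟪y, x⟫_ℂ := hiff.mp hc
    have hskew : ∀ a b : V, ω a b = -ω b a := by
      intro a b
      have he := ω5 (a + b)
      rw [ω1, ω3, ω3, ω5 a, ω5 b] at he
      linear_combination he
    have hA2 : ∀ x : V, A0 (A0 x) = -x := by
      intro x
      apply ext_inner_right ℂ
      intro w
      rw [hA0, hskew, ← hA0, hAA, inner_neg_left]
    obtain ⟨m, f, -, hff, hfA, hspan⟩ :=
      aux_exists_family A0 hAA hA2 (Module.finrank ℂ V) ⊤ (fun x _ => Submodule.mem_top)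
        (finrank_top ℂ V)
    have hfA' : ∀ a b : Fin m, ⟪A0 (f a), f b⟫_ℂ = 0 := fun a b => by
      rw [← inner_conj_symm, hfA, map_zero]
    set v0 : Fin (2 * m) → V := fun i =>
      if (i : ℕ) % 2 = 0 then f ⟨(i : ℕ) / 2, by have := i.isLt; omega⟩
      else A0 (f ⟨(i : ℕ) / 2, by have := i.isLt; omega⟩) with hv0_def
    have hv0e : ∀ i : Fin (2 * m), (i : ℕ) % 2 = 0 →
        v0 i = f ⟨(i : ℕ) / 2, by have := i.isLt; omega⟩ := by
      intro i hi
      simp only [hv0_def, if_pos hi]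
    have hv0o : ∀ i : Fin (2 * m), ¬((i : ℕ) % 2 = 0) →
        v0 i = A0 (f ⟨(i : ℕ) / 2, by have := i.isLt; omega⟩) := by
      intro i hi
      simp only [hv0_def, if_neg hi]
    have hv_on : ∀ i j, ⟪v0 i, v0 j⟫_ℂ = if i = j then 1 else 0 := by
      intro i j
      by_cases hi : (i : ℕ) % 2 = 0 <;> by_cases hj : (j : ℕ) % 2 = 0
      · rw [hv0e i hi, hv0e j hj, hff]
        exact if_congr (by simp only [Fin.mk.injEq, Fin.ext_iff]; omega) rfl rfl
      · rw [hv0e i hi, hv0o j hj, hfA, if_neg (show ¬(i = j) from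
          fun hij => hj (by rw [← hij]; exact hi))]
      · rw [hv0o i hi, hv0e j hj, hfA', if_neg (show ¬(i = j) from
          fun hij => hi (by rw [hij]; exact hj))]
      · rw [hv0o i hi, hv0o j hj, hAA, hff]
        exact if_congr (by simp only [Fin.mk.injEq, Fin.ext_iff]; omega) rfl rfl
    have hv_orth : Orthonormal ℂ v0 := orthonormal_iff_ite.mpr hv_on
    have hsub : Set.range f ∪ A0 '' Set.range f ⊆ Set.range v0 := by
      rintro x (⟨a, rfl⟩ | ⟨y, ⟨a, rfl⟩, rfl⟩)
      · refine ⟨⟨2 * (a : ℕ), by have := a.isLt; omega⟩, ?_⟩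
        rw [hv0e _ (show (2 * (a : ℕ)) % 2 = 0 by omega)]
        congr 1
        apply Fin.ext
        show 2 * (a : ℕ) / 2 = (a : ℕ)
        omega
      · refine ⟨⟨2 * (a : ℕ) + 1, by have := a.isLt; omega⟩, ?_⟩
        rw [hv0o _ (show ¬((2 * (a : ℕ) + 1) % 2 = 0) by omega)]
        congr 2
        apply Fin.ext
        show (2 * (a : ℕ) + 1) / 2 = (a : ℕ)
        omega
    have hv_span : ⊤ ≤ Submodule.span ℂ (Set.range v0) := by
      rw [← hspan]
      exact Submodule.span_mono hsub
    refine ⟨m, Basis.mk hv_orth.linearIndependent hv_span, ?_, ?_⟩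
    · intro i j
      rw [Basis.mk_apply, Basis.mk_apply, ← hinner, hv_on]
      exact if_congr eq_comm rfl rfl
    · intro i j
      rw [Basis.mk_apply, Basis.mk_apply, ← hA0]
      by_cases hi : (i : ℕ) % 2 = 0 <;> by_cases hj : (j : ℕ) % 2 = 0
      · -- both even : both sides zero
        have hC1 : ¬((i : ℕ) % 2 = 0 ∧ (j : ℕ) = (i : ℕ) + 1) := by
          rintro ⟨h1, h2⟩; omega
        have hC2 : ¬((j : ℕ) % 2 = 0 ∧ (i : ℕ) = (j : ℕ) + 1) := by
          rintro ⟨h1, h2⟩; omega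
        rw [if_neg hC1, if_neg hC2, hv0e i hi, hv0e j hj, hfA']
      · -- i even, j odd
        have hC2 : ¬((j : ℕ) % 2 = 0 ∧ (i : ℕ) = (j : ℕ) + 1) := by
          rintro ⟨h1, h2⟩; omega
        rw [if_neg hC2, hv0e i hi, hv0o j hj, hAA, hff]
        by_cases hcc : (j : ℕ) = (i : ℕ) + 1
        · have hfin : (⟨(j : ℕ) / 2, by have := j.isLt; omega⟩ : Fin m)
              = ⟨(i : ℕ) / 2, by have := i.isLt; omega⟩ := by
            apply Fin.ext
            show (j : ℕ) / 2 = (i : ℕ) / 2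
            omega
          rw [if_pos hfin, if_pos ⟨hi, hcc⟩]
        · have hfin : (⟨(j : ℕ) / 2, by have := j.isLt; omega⟩ : Fin m)
              ≠ ⟨(i : ℕ) / 2, by have := i.isLt; omega⟩ := by
            intro he
            have h' : (j : ℕ) / 2 = (i : ℕ) / 2 := congrArg Fin.val he
            omega
          rw [if_neg hfin, if_neg (show ¬((i : ℕ) % 2 = 0 ∧ (j : ℕ) = (i : ℕ) + 1)
            from fun hd => hcc hd.2)]
      · -- i odd, j even
        have hC1 : ¬((i : ℕ) % 2 = 0 ∧ (j : ℕ) = (i : ℕ) + 1) := fun hd => hi hd.1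
        rw [if_neg hC1, hv0o i hi, hv0e j hj, hA2, inner_neg_left, hff]
        by_cases hcc : (i : ℕ) = (j : ℕ) + 1
        · have hfin : (⟨(i : ℕ) / 2, by have := i.isLt; omega⟩ : Fin m)
              = ⟨(j : ℕ) / 2, by have := j.isLt; omega⟩ := by
            apply Fin.ext
            show (i : ℕ) / 2 = (j : ℕ) / 2
            omega
          rw [if_pos hfin, if_pos (show (j : ℕ) % 2 = 0 ∧ (i : ℕ) = (j : ℕ) + 1
            from ⟨hj, hcc⟩)]
        · have hfin : (⟨(i : ℕ) / 2, by have := i.isLt; omega⟩ : Fin m)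
              ≠ ⟨(j : ℕ) / 2, by have := j.isLt; omega⟩ := by
            intro he
            have h' : (i : ℕ) / 2 = (j : ℕ) / 2 := congrArg Fin.val he
            omega
          rw [if_neg (show ¬((j : ℕ) % 2 = 0 ∧ (i : ℕ) = (j : ℕ) + 1)
            from fun hd => hcc hd.2), if_neg hfin]
          norm_num
      · -- both odd : both sides zero
        have hC1 : ¬((i : ℕ) % 2 = 0 ∧ (j : ℕ) = (i : ℕ) + 1) := fun hd => hi hd.1
        have hC2 : ¬((j : ℕ) % 2 = 0 ∧ (i : ℕ) = (j : ℕ) + 1) := fun hd => hj hd.1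
        rw [if_neg hC1, if_neg hC2, hv0o i hi, hv0o j hj, hA2, inner_neg_left, hfA]
        norm_num
  · -- backward direction
    rintro ⟨m, b, hhb, hωb⟩
    apply hiff.mpr
    have hbi : ∀ i j, ⟪b i, b j⟫_ℂ = if i = j then 1 else 0 := by
      intro i j
      rw [hinner, hhb]
      exact if_congr eq_comm rfl rfl
    have hAb : ∀ i : Fin (2 * m), ∀ _hi : (i : ℕ) % 2 = 0,
        A0 (b i) = b ⟨(i : ℕ) + 1, by omega⟩ := by
      intro i hi
      apply aux_eq_of_inner_basis b
      intro j
      rw [hA0, hωb, hbi]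
      have hC2 : ¬((j : ℕ) % 2 = 0 ∧ (i : ℕ) = (j : ℕ) + 1) := by
        rintro ⟨h1, h2⟩; omega
      rw [if_neg hC2]
      refine if_congr ?_ rfl rfl
      constructor
      · rintro ⟨h1, h2⟩
        apply Fin.ext
        show (i : ℕ) + 1 = (j : ℕ)
        omega
      · intro he
        have h' : (i : ℕ) + 1 = (j : ℕ) := congrArg Fin.val he
        exact ⟨hi, by omega⟩
    have hAb' : ∀ i : Fin (2 * m), ¬((i : ℕ) % 2 = 0) →
        A0 (b i) = -b ⟨(i : ℕ) - 1, by have := i.isLt; omega⟩ := by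
      intro i hi
      apply aux_eq_of_inner_basis b
      intro j
      rw [hA0, hωb, inner_neg_left, hbi,
        if_neg (show ¬((i : ℕ) % 2 = 0 ∧ (j : ℕ) = (i : ℕ) + 1) from fun hd => hi hd.1)]
      by_cases hcc : (i : ℕ) = (j : ℕ) + 1
      · have hj2 : (j : ℕ) % 2 = 0 := by omega
        have hfin : (⟨(i : ℕ) - 1, by have := i.isLt; omega⟩ : Fin (2 * m)) = j := by
          apply Fin.ext
          show (i : ℕ) - 1 = (j : ℕ)
          omega
        rw [if_pos hfin, if_pos (show (j : ℕ) % 2 = 0 ∧ (i : ℕ) = (j : ℕ) + 1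
          from ⟨hj2, hcc⟩)]
      · have hfin : (⟨(i : ℕ) - 1, by have := i.isLt; omega⟩ : Fin (2 * m)) ≠ j := by
          intro he
          have h' : (i : ℕ) - 1 = (j : ℕ) := congrArg Fin.val he
          omega
        rw [if_neg (show ¬((j : ℕ) % 2 = 0 ∧ (i : ℕ) = (j : ℕ) + 1)
          from fun hd => hcc hd.2), if_neg hfin]
        norm_num
    have hAAb : ∀ i j, ⟪A0 (b i), A0 (b j)⟫_ℂ = ⟪b j, b i⟫_ℂ := by
      intro i j
      rw [hbi]
      by_cases hi : (i : ℕ) % 2 = 0 <;> by_cases hj : (j : ℕ) % 2 = 0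
      · rw [hAb i hi, hAb j hj, hbi]
        refine if_congr ?_ rfl rfl
        constructor
        · intro he
          have h' : (i : ℕ) + 1 = (j : ℕ) + 1 := congrArg Fin.val he
          apply Fin.ext
          show (j : ℕ) = (i : ℕ)
          omega
        · intro he
          have h' : (j : ℕ) = (i : ℕ) := congrArg Fin.val he
          apply Fin.ext
          show (i : ℕ) + 1 = (j : ℕ) + 1
          omega
      · rw [hAb i hi, hAb' j hj, inner_neg_right, hbi]
        have h1 : (⟨(i : ℕ) + 1, by have := i.isLt; omega⟩ : Fin (2 * m))
            ≠ ⟨(j : ℕ) - 1, by have := j.isLt; omega⟩ := by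
          intro he
          have h' : (i : ℕ) + 1 = (j : ℕ) - 1 := congrArg Fin.val he
          omega
        have h2 : j ≠ i := by
          intro he
          have h' : (j : ℕ) = (i : ℕ) := congrArg Fin.val he
          omega
        rw [if_neg h1, if_neg h2]
        norm_num
      · rw [hAb' i hi, hAb j hj, inner_neg_left, hbi]
        have h1 : (⟨(i : ℕ) - 1, by have := i.isLt; omega⟩ : Fin (2 * m))
            ≠ ⟨(j : ℕ) + 1, by have := j.isLt; omega⟩ := by
          intro he
          have h' : (i : ℕ) - 1 = (j : ℕ) + 1 := congrArg Fin.val he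
          omega
        have h2 : j ≠ i := by
          intro he
          have h' : (j : ℕ) = (i : ℕ) := congrArg Fin.val he
          omega
        rw [if_neg h1, if_neg h2]
        norm_num
      · rw [hAb' i hi, hAb' j hj, inner_neg_left, inner_neg_right, hbi, neg_neg]
        refine if_congr ?_ rfl rfl
        constructor
        · intro he
          have h' : (i : ℕ) - 1 = (j : ℕ) - 1 := congrArg Fin.val he
          apply Fin.ext
          show (j : ℕ) = (i : ℕ)
          omega
        · intro he
          have h' : (j : ℕ) = (i : ℕ) := congrArg Fin.val he
          apply Fin.ext
          show (i : ℕ) - 1 = (j : ℕ) - 1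
          omega
    exact fun u v =>
      aux_sesq_ext b
        { toFun := A0, map_add' := hA0add, map_smul' := fun r x => hA0smul r x }
        hAAb u v
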